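/- Let θ and ρ be probability density functions on ℝᵈ with respect to Lebesgue measure (nonnegative, measurable, integrating to 1), and let q : (Fin d → ℝ) → ℝ be measurable with q(x) > 0 for a.e. x. Assume ρ(x) > 0 for a.e. x in {θ > 0}, and that the functions x ↦ θ(x) * Real.log (θ(x)/ρ(x)), x ↦ θ(x) * Real.log (q(x)), and x ↦ q(x) * ρ(x) are Lebesgue integrable. Then ∫ θ(x) * Real.log (θ(x)/ρ(x)) dx + ∫ q(x) * ρ(x) dx ≥ ∫ θ(x) * Real.log (q(x)) dx + 1, with equality if and only if ρ(x) = θ(x)/q(x) for almost every x. (This is the paper's variational claim that ρ = θ/q is the unique minimizer of the Lagrangian L(ρ,Λ) = KL(θ‖ρ) + ∫ q ρ − const over probability densities.) -/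

import Mathlib

open MeasureTheory

lemma key_pointwise (a b c : ℝ) (ha : 0 ≤ a) (hb : 0 ≤ b) (hc : 0 < c)
    (hab : 0 < a → 0 < b) :
    0 ≤ a * Real.log (a / b) + c * b - a * Real.log c - a ∧
    (a * Real.log (a / b) + c * b - a * Real.log c - a = 0 ↔ b = a / c) := by
  rcases ha.eq_or_lt with h0 | h0
  · have ha0 : a = 0 := h0.symm
    subst ha0
    refine ⟨by simp only [zero_mul, zero_add, sub_zero]; positivity, ?_⟩
    simp only [zero_mul, zero_add, sub_zero, zero_div]
    constructor
    · intro h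
      rcases mul_eq_zero.mp h with h | h
      · exact absurd h hc.ne'
      · exact h
    · intro h; simp [h]
  · have hbpos : 0 < b := hab h0
    set t : ℝ := c * b / a with ht
    have htpos : 0 < t := by positivity
    have hlog : Real.log (a / b) - Real.log c = - Real.log t := by
      rw [ht, Real.log_div (mul_pos hc hbpos).ne' h0.ne', Real.log_mul hc.ne' hbpos.ne',
        Real.log_div h0.ne' hbpos.ne']
      ring
    have hexpr : a * Real.log (a / b) + c * b - a * Real.log c - a
        = (c * b - a) - a * Real.log t := by
      have : a * Real.log (a / b) - a * Real.log c = a * (Real.log (a / b) - Real.log c) := by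
        ring
      rw [show a * Real.log (a / b) + c * b - a * Real.log c - a
          = (a * Real.log (a / b) - a * Real.log c) + c * b - a by ring, this, hlog]
      ring
    have hat : a * t = c * b := by
      rw [ht, mul_div_assoc']; exact mul_div_cancel_left₀ _ h0.ne'
    have hle : Real.log t ≤ t - 1 := Real.log_le_sub_one_of_pos htpos
    constructor
    · rw [hexpr]
      nlinarith [mul_le_mul_of_nonneg_left hle h0.le]
    · rw [hexpr]
      constructor
      · intro heq
        have hteq : Real.log t = t - 1 := by
          have h' : a * Real.log t = c * b - a := by linarith
          have : a * Real.log t = a * (t - 1) := by rw [h']; nlinarith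
          have := mul_left_cancel₀ h0.ne' this
          linarith [this]
        have ht1 : t = 1 := by
          by_contra hne
          have := Real.log_lt_sub_one_of_pos htpos hne
          linarith
        have : c * b = a := by nlinarith
        field_simp
        linarith
      · intro hbe
        have : c * b = a := by rw [hbe]; field_simp
        have ht1 : t = 1 := by rw [ht, this]; field_simp
        rw [ht1]
        simp
        linarith

/-- `ρ = θ/q` is the unique minimizer of the Lagrangian
`L(ρ,Λ) = KL(θ‖ρ) + ∫ q ρ − const` over probability densities:
`KL(θ‖ρ) + ∫ q ρ ≥ ∫ θ log q + 1`, with equality iff `ρ = θ/q` a.e. -/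
theorem lagrangian_variational_inequality (d : ℕ)
    (θ ρ q : (Fin d → ℝ) → ℝ)
    (hθ0 : ∀ x, 0 ≤ θ x) (hθm : Measurable θ) (hθ1 : ∫ x : Fin d → ℝ, θ x = 1)
    (hρ0 : ∀ x, 0 ≤ ρ x) (hρm : Measurable ρ) (hρ1 : ∫ x : Fin d → ℝ, ρ x = 1)
    (hqm : Measurable q) (hq : ∀ᵐ x : Fin d → ℝ ∂volume, 0 < q x)
    (hρpos : ∀ᵐ x : Fin d → ℝ ∂volume, 0 < θ x → 0 < ρ x)
    (h1 : Integrable (fun x : Fin d → ℝ => θ x * Real.log (θ x / ρ x)))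
    (h2 : Integrable (fun x : Fin d → ℝ => θ x * Real.log (q x)))
    (h3 : Integrable (fun x : Fin d → ℝ => q x * ρ x)) :
    ((∫ x : Fin d → ℝ, θ x * Real.log (θ x / ρ x)) + ∫ x : Fin d → ℝ, q x * ρ x
      ≥ (∫ x : Fin d → ℝ, θ x * Real.log (q x)) + 1) ∧
    (((∫ x : Fin d → ℝ, θ x * Real.log (θ x / ρ x)) + ∫ x : Fin d → ℝ, q x * ρ x
      = (∫ x : Fin d → ℝ, θ x * Real.log (q x)) + 1) ↔
      ∀ᵐ x : Fin d → ℝ ∂volume, ρ x = θ x / q x) := by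
  have hθint : Integrable θ := by
    by_contra h
    rw [integral_undef h] at hθ1
    norm_num at hθ1
  set g : (Fin d → ℝ) → ℝ := fun x =>
    θ x * Real.log (θ x / ρ x) + q x * ρ x - θ x * Real.log (q x) - θ x with hg
  have hg_int : Integrable g := ((h1.add h3).sub h2).sub hθint
  have hg0 : 0 ≤ᵐ[volume] g := by
    filter_upwards [hq, hρpos] with x hqx hρx
    exact (key_pointwise (θ x) (ρ x) (q x) (hθ0 x) (hρ0 x) hqx hρx).1
  have hgint_eq : ∫ x, g x =
      (∫ x, θ x * Real.log (θ x / ρ x)) + (∫ x, q x * ρ x)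
        - (∫ x, θ x * Real.log (q x)) - 1 := by
    have e1 := integral_sub ((h1.add h3).sub h2) hθint
    have e2 := integral_sub (h1.add h3) h2
    have e3 := integral_add h1 h3
    simp only [Pi.add_apply, Pi.sub_apply] at e1 e2 e3
    rw [hg]
    rw [e1, e2, e3, hθ1]
  constructor
  · have := integral_nonneg_of_ae hg0
    rw [hgint_eq] at this
    linarith
  · constructor
    · intro heq
      have hz : ∫ x, g x = 0 := by rw [hgint_eq]; linarith
      have : g =ᵐ[volume] 0 :=
        (integral_eq_zero_iff_of_nonneg_ae hg0 hg_int).mp hz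
      filter_upwards [hq, hρpos, this] with x hqx hρx hgx
      exact (key_pointwise (θ x) (ρ x) (q x) (hθ0 x) (hρ0 x) hqx hρx).2.mp (by simpa using hgx)
    · intro hae
      have hgz : g =ᵐ[volume] 0 := by
        filter_upwards [hq, hρpos, hae] with x hqx hρx hx
        exact (key_pointwise (θ x) (ρ x) (q x) (hθ0 x) (hρ0 x) hqx hρx).2.mpr hx
      have : ∫ x, g x = 0 := by rw [integral_congr_ae hgz]; simp
      rw [hgint_eq] at this
      linarith
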